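/- Let a > −1 be a real number and for each M ≥ 1 set Z_M = Σ_{k=1}^M k^a. Then lim_{M→∞} Σ_{k=1}^M (k^a/Z_M) (1 − k^a/Z_M)^{M−1} = (a+1) ∫_0^1 x^a e^{−(a+1)x^a} dx. Consequently, in the algebraic fitness model φ(i) = i^a the average number of introverts converges as M → ∞ to A(a) = (a+1) ∫_0^1 x^a e^{−(a+1)x^a} dx. -/

import Mathlib

open Filter Finset Real MeasureTheory intervalIntegral Set

lemma sum_Icc_eq_head (M : ℕ) (hM : 1 ≤ M) (f : ℕ → ℝ) :
    ∑ k ∈ Finset.Icc 1 M, f k = f 1 + ∑ i ∈ Finset.Ico 1 M, f (i + 1) := by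
  rw [← Finset.Ico_add_one_right_eq_Icc, Finset.sum_Ico_eq_sum_range, Finset.sum_Ico_eq_sum_range]
  have h1 : M + 1 - 1 = (M - 1) + 1 := by omega
  rw [h1, Finset.sum_range_succ']
  rw [add_comm]
  norm_num [Nat.add_assoc]

lemma sum_Icc_eq_tail (M : ℕ) (hM : 1 ≤ M) (f : ℕ → ℝ) :
    ∑ k ∈ Finset.Icc 1 M, f k = (∑ i ∈ Finset.Ico 1 M, f i) + f M := by
  rw [← Finset.Ico_add_one_right_eq_Icc, Finset.sum_Ico_succ_top hM]

lemma integral_bounds (a : ℝ) (ha : -1 < a) (M : ℕ) (hM : 1 ≤ M) :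
    (∫ x in (1:ℝ)..(M:ℝ), x ^ a) ≤ (∑ m ∈ Finset.Icc 1 M, (m : ℝ) ^ a) ∧
    (∑ m ∈ Finset.Icc 1 M, (m : ℝ) ^ a) ≤ (∫ x in (1:ℝ)..(M:ℝ), x ^ a) + 1 + (M : ℝ) ^ a := by
  have hM1 : ((1:ℕ):ℝ) ≤ ((M:ℕ):ℝ) := by exact_mod_cast hM
  have hposM : (0:ℝ) < (M:ℝ) ^ a := Real.rpow_pos_of_pos (by exact_mod_cast hM) a
  rcases le_or_gt 0 a with hA | hA
  · have hmono : MonotoneOn (fun x : ℝ => x ^ a) (Set.Icc ((1:ℕ):ℝ) ((M:ℕ):ℝ)) := by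
      intro x hx y hy hxy
      exact Real.rpow_le_rpow (le_trans zero_le_one (by exact_mod_cast hx.1)) hxy hA
    have hI := hmono.integral_le_sum_Ico hM
    have hS := hmono.sum_le_integral_Ico hM
    simp only [Nat.cast_one] at hI hS
    constructor
    · rw [sum_Icc_eq_head M hM]
      have h1 : ((1:ℕ):ℝ) ^ a = 1 := by simp
      push_cast at hI ⊢
      rw [Real.one_rpow]
      linarith
    · rw [sum_Icc_eq_tail M hM]
      linarith
  · have hanti : AntitoneOn (fun x : ℝ => x ^ a) (Set.Icc ((1:ℕ):ℝ) ((M:ℕ):ℝ)) := by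
      intro x hx y hy hxy
      exact Real.rpow_le_rpow_of_nonpos (lt_of_lt_of_le zero_lt_one (by exact_mod_cast hx.1)) hxy hA.le
    have hI := hanti.integral_le_sum_Ico hM
    have hS := hanti.sum_le_integral_Ico hM
    simp only [Nat.cast_one] at hI hS
    constructor
    · rw [sum_Icc_eq_tail M hM]
      linarith
    · rw [sum_Icc_eq_head M hM]
      have h1 : ((1:ℕ):ℝ) ^ a = 1 := by simp
      push_cast at hS ⊢
      rw [Real.one_rpow]
      linarith

lemma zsum_tendsto (a : ℝ) (ha : -1 < a) :
    Tendsto (fun M : ℕ => (∑ m ∈ Finset.Icc 1 M, (m : ℝ) ^ a) / (M : ℝ) ^ (a + 1))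
      atTop (nhds (1 / (a + 1))) := by
  have ha1 : (0:ℝ) < a + 1 := by linarith
  have hMpow : Tendsto (fun M : ℕ => ((M : ℝ) ^ (a + 1))⁻¹) atTop (nhds 0) := by
    apply Tendsto.inv_tendsto_atTop
    exact (tendsto_rpow_atTop ha1).comp tendsto_natCast_atTop_atTop
  have hMinv : Tendsto (fun M : ℕ => ((M : ℝ))⁻¹) atTop (nhds 0) :=
    tendsto_inv_atTop_zero.comp tendsto_natCast_atTop_atTop
  have hlow : Tendsto (fun M : ℕ => (1 - ((M : ℝ) ^ (a + 1))⁻¹) / (a + 1)) atTop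
      (nhds (1 / (a + 1))) := by
    have := ((tendsto_const_nhds (x := (1:ℝ))).sub hMpow).div_const (a + 1)
    simpa using this
  have hup : Tendsto (fun M : ℕ =>
      (1 - ((M : ℝ) ^ (a + 1))⁻¹) / (a + 1) + (((M : ℝ) ^ (a + 1))⁻¹ + ((M:ℝ))⁻¹)) atTop
      (nhds (1 / (a + 1))) := by
    have := hlow.add (hMpow.add hMinv)
    simpa using this
  apply tendsto_of_tendsto_of_tendsto_of_le_of_le' hlow hup
  · filter_upwards [eventually_ge_atTop 1] with M hM
    have hMR : (0:ℝ) < (M:ℝ) := by exact_mod_cast hM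
    have hMp : (0:ℝ) < (M:ℝ) ^ (a+1) := Real.rpow_pos_of_pos hMR _
    have hint : (∫ x in (1:ℝ)..(M:ℝ), x ^ a) = ((M:ℝ) ^ (a+1) - 1) / (a + 1) := by
      rw [integral_rpow (Or.inl ha)]
      norm_num
    have hb := (integral_bounds a ha M hM).1
    rw [hint] at hb
    have hre : (1 - ((M:ℝ) ^ (a+1))⁻¹)/(a+1) = (((M:ℝ)^(a+1)-1)/(a+1))/((M:ℝ)^(a+1)) := by
      field_simp
    rw [hre]
    gcongr
  · filter_upwards [eventually_ge_atTop 1] with M hM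
    have hMR : (0:ℝ) < (M:ℝ) := by exact_mod_cast hM
    have hMp : (0:ℝ) < (M:ℝ) ^ (a+1) := Real.rpow_pos_of_pos hMR _
    have hint : (∫ x in (1:ℝ)..(M:ℝ), x ^ a) = ((M:ℝ) ^ (a+1) - 1) / (a + 1) := by
      rw [integral_rpow (Or.inl ha)]
      norm_num
    have hb := (integral_bounds a ha M hM).2
    rw [hint] at hb
    have hre : (1 - ((M:ℝ) ^ (a+1))⁻¹)/(a+1) + (((M:ℝ) ^ (a+1))⁻¹ + ((M:ℝ))⁻¹)
        = (((M:ℝ)^(a+1)-1)/(a+1) + 1 + (M:ℝ)^a)/((M:ℝ)^(a+1)) := by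
      rw [Real.rpow_add_one hMR.ne']
      field_simp
      ring
    rw [hre]
    gcongr

lemma pow_tendsto_exp {p : ℕ → ℝ} {c : ℝ} (hp : ∀ᶠ M in atTop, 0 < p M ∧ p M < 1)
    (hc : Tendsto (fun M : ℕ => (M : ℝ) * p M) atTop (nhds c)) :
    Tendsto (fun M : ℕ => (1 - p M) ^ (M - 1)) atTop (nhds (Real.exp (-c))) := by
  have hMinv : Tendsto (fun M : ℕ => ((M : ℝ))⁻¹) atTop (nhds 0) :=
    tendsto_inv_atTop_zero.comp tendsto_natCast_atTop_atTop
  have hp0 : Tendsto p atTop (nhds 0) := by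
    have h := hc.mul hMinv
    rw [mul_zero] at h
    apply h.congr'
    filter_upwards [eventually_ge_atTop 1] with M hM
    have : (M:ℝ) ≠ 0 := by positivity
    field_simp
  have hderiv : HasDerivAt (fun t : ℝ => Real.log (1 - t)) (-1) 0 := by
    have h1 : HasDerivAt (fun t : ℝ => 1 - t) (-1) 0 := (hasDerivAt_id 0).const_sub 1
    have h2 := (Real.hasDerivAt_log (by norm_num : (1:ℝ) - 0 ≠ 0)).comp 0 h1
    simpa [Function.comp_def] using h2
  have hslope := hasDerivAt_iff_tendsto_slope.mp hderiv
  have hpne : Tendsto p atTop (nhdsWithin 0 {(0:ℝ)}ᶜ) := by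
    apply tendsto_nhdsWithin_of_tendsto_nhds_of_eventually_within _ hp0
    filter_upwards [hp] with M hM
    exact ne_of_gt hM.1
  have hlog : Tendsto (fun M => Real.log (1 - p M) / p M) atTop (nhds (-1)) := by
    have h := hslope.comp hpne
    apply h.congr
    intro M
    simp [slope_def_field, Function.comp]
  have hfrac : Tendsto (fun M : ℕ => ((M:ℝ) - 1) * ((M:ℝ))⁻¹) atTop (nhds 1) := by
    have h := (tendsto_const_nhds (x := (1:ℝ)) (f := atTop)).sub hMinv
    rw [sub_zero] at h
    apply h.congr'
    filter_upwards [eventually_ge_atTop 1] with M hM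
    have : (M:ℝ) ≠ 0 := by positivity
    field_simp
  have hexp : Tendsto (fun M : ℕ => ((M:ℝ) - 1) * Real.log (1 - p M)) atTop (nhds (-c)) := by
    have h := (hc.mul hlog).mul hfrac
    have he : c * -1 * 1 = -c := by ring
    rw [he] at h
    apply h.congr'
    filter_upwards [hp, eventually_ge_atTop 1] with M hM hM1
    have hMne : (M:ℝ) ≠ 0 := by positivity
    have hpne' : p M ≠ 0 := ne_of_gt hM.1
    field_simp
  have hcont := (Real.continuous_exp.tendsto _).comp hexp
  apply hcont.congr'
  filter_upwards [hp, eventually_ge_atTop 1] with M hM hM1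
  have h1p : 0 < 1 - p M := by linarith [hM.2]
  have : ((M - 1 : ℕ) : ℝ) = (M:ℝ) - 1 := by
    have := Nat.cast_sub hM1 (R := ℝ)
    simpa using this
  rw [Function.comp, ← this, ← Real.exp_log h1p, ← Real.exp_nat_mul]
  rw [Real.exp_log h1p]

lemma sum_eq_integral (M : ℕ) (hM : 1 ≤ M) (q : ℕ → ℝ) :
    ∑ k ∈ Finset.Icc 1 M, q k = ∫ x in (0:ℝ)..1, (M:ℝ) * q ⌈(M:ℝ) * x⌉₊ := by
  have hMR : (0:ℝ) < (M:ℝ) := by exact_mod_cast hM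
  set f : ℝ → ℝ := fun x => (M:ℝ) * q ⌈(M:ℝ) * x⌉₊ with hf
  set A : ℕ → ℝ := fun i => (i:ℝ) / M with hA
  have hle : ∀ i : ℕ, A i ≤ A (i + 1) := by
    intro i
    rw [hA]
    have h : (i:ℝ) ≤ ((i+1:ℕ):ℝ) := by push_cast; linarith
    exact div_le_div_of_nonneg_right h hMR.le
  have hceil : ∀ i : ℕ, ∀ x ∈ Set.Ioc (A i) (A (i + 1)), ⌈(M:ℝ) * x⌉₊ = i + 1 := by
    intro i x hx
    rw [Nat.ceil_eq_iff (by omega)]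
    have h1 : (i:ℝ) < (M:ℝ) * x := by
      rw [hA] at hx
      have := hx.1
      rw [div_lt_iff₀ hMR] at this
      linarith [this]
    have h2 : (M:ℝ) * x ≤ (i:ℝ) + 1 := by
      have := hx.2
      rw [hA, le_div_iff₀ hMR] at this
      push_cast at this
      linarith [this]
    constructor
    · simpa using h1
    · push_cast; linarith
  have hEq : ∀ i : ℕ, Set.EqOn f (fun _ => (M:ℝ) * q (i + 1)) (Set.Ioc (A i) (A (i+1))) := by
    intro i x hx
    simp only [hf]
    rw [hceil i x hx]
  have hint : ∀ i : ℕ, i < M → IntervalIntegrable f volume (A i) (A (i + 1)) := by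
    intro i _
    rw [intervalIntegrable_iff_integrableOn_Ioc_of_le (hle i)]
    exact (integrableOn_congr_fun (hEq i) measurableSet_Ioc).mpr (integrableOn_const
      (measure_Ioc_lt_top.ne))
  have hpiece : ∀ i : ℕ, i < M → (∫ x in (A i)..(A (i + 1)), f x) = q (i + 1) := by
    intro i _
    rw [integral_of_le (hle i), setIntegral_congr_fun measurableSet_Ioc (hEq i),
      setIntegral_const, Real.volume_real_Ioc_of_le (hle i)]
    have : A (i+1) - A i = 1 / M := by
      rw [hA]; push_cast; field_simp; ring
    rw [this, smul_eq_mul]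
    field_simp
  have hadj := intervalIntegral.sum_integral_adjacent_intervals hint
  have hA0 : A 0 = 0 := by simp [hA]
  have hAM : A M = 1 := by rw [hA]; field_simp
  rw [hA0, hAM] at hadj
  rw [← hadj]
  rw [← Finset.Ico_add_one_right_eq_Icc, Finset.sum_Ico_eq_sum_range]
  apply Finset.sum_congr rfl
  intro i hi
  rw [Finset.mem_range] at hi
  rw [hpiece i (by omega)]
  congr 1
  omega

lemma Zpos (a : ℝ) (M : ℕ) (hM : 1 ≤ M) : 0 < ∑ m ∈ Finset.Icc 1 M, (m:ℝ)^a := by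
  apply Finset.sum_pos
  · intro i hi
    have : 0 < (i:ℝ) := by
      have := (Finset.mem_Icc.mp hi).1
      exact_mod_cast Nat.lt_of_lt_of_le Nat.zero_lt_one this
    exact Real.rpow_pos_of_pos this a
  · exact ⟨1, Finset.mem_Icc.mpr ⟨le_refl 1, hM⟩⟩

lemma Zterm_le (a : ℝ) (M k : ℕ) (hk : k ∈ Finset.Icc 1 M) :
    (k:ℝ)^a ≤ ∑ m ∈ Finset.Icc 1 M, (m:ℝ)^a := by
  apply Finset.single_le_sum (fun i hi => ?_) hk
  have : 0 < (i:ℝ) := by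
    have := (Finset.mem_Icc.mp hi).1
    exact_mod_cast Nat.lt_of_lt_of_le Nat.zero_lt_one this
  exact (Real.rpow_pos_of_pos this a).le

lemma Zterm_lt (a : ℝ) (M k : ℕ) (hM : 2 ≤ M) (hk : k ∈ Finset.Icc 1 M) :
    (k:ℝ)^a < ∑ m ∈ Finset.Icc 1 M, (m:ℝ)^a := by
  have hpos : ∀ i : ℕ, i ∈ Finset.Icc 1 M → 0 < (i:ℝ)^a := by
    intro i hi
    have : 0 < (i:ℝ) := by
      have := (Finset.mem_Icc.mp hi).1
      exact_mod_cast Nat.lt_of_lt_of_le Nat.zero_lt_one this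
    exact Real.rpow_pos_of_pos this a
  set j : ℕ := if k = 1 then 2 else 1 with hj
  have hjk : j ≠ k := by
    rw [hj]; split <;> omega
  have hjmem : j ∈ Finset.Icc 1 M := by
    rw [hj]; split <;> (apply Finset.mem_Icc.mpr; omega)
  exact Finset.single_lt_sum hjk hk hjmem (hpos j hjmem) (fun i hi _ => (hpos i hi).le)

lemma kfacts (M : ℕ) (hM : 1 ≤ M) (x : ℝ) (hx : x ∈ Set.Ioc (0:ℝ) 1) :
    1 ≤ ⌈(M:ℝ) * x⌉₊ ∧ ⌈(M:ℝ) * x⌉₊ ≤ M ∧ (M:ℝ) * x ≤ (⌈(M:ℝ) * x⌉₊ : ℝ) ∧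
      ((⌈(M:ℝ) * x⌉₊ : ℝ)) < (M:ℝ) * x + 1 := by
  have hMR : (0:ℝ) < (M:ℝ) := by exact_mod_cast hM
  have hxpos : 0 < (M:ℝ) * x := mul_pos hMR hx.1
  refine ⟨?_, ?_, Nat.le_ceil _, Nat.ceil_lt_add_one (le_of_lt hxpos)⟩
  · exact Nat.ceil_pos.mpr hxpos
  · rw [Nat.ceil_le]
    calc (M:ℝ) * x ≤ (M:ℝ) * 1 := by nlinarith [hx.2]
    _ = (M:ℝ) := by ring
lemma bound_est (a : ℝ) (ha : -1 < a) (M : ℕ) (hM : 1 ≤ M)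
    (hZle : (M:ℝ)^(a+1) / (∑ m ∈ Finset.Icc 1 M, (m:ℝ)^a) ≤ 2*(a+1))
    (x : ℝ) (hx : x ∈ Set.Ioc (0:ℝ) 1) :
    ‖(M:ℝ) * (((⌈(M:ℝ)*x⌉₊:ℝ))^a / (∑ m ∈ Finset.Icc 1 M, (m:ℝ)^a) *
        (1 - ((⌈(M:ℝ)*x⌉₊:ℝ))^a / (∑ m ∈ Finset.Icc 1 M, (m:ℝ)^a)) ^ (M-1))‖
      ≤ 2*(a+1) * (x^a + 1) := by
  set Z := ∑ m ∈ Finset.Icc 1 M, (m:ℝ)^a with hZdef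
  set k := ⌈(M:ℝ)*x⌉₊ with hkdef
  obtain ⟨hk1, hkM, hklb, hkub⟩ := kfacts M hM x hx
  have hMR : (0:ℝ) < (M:ℝ) := by exact_mod_cast hM
  have hZ0 : 0 < Z := Zpos a M hM
  have hkpos : (0:ℝ) < (k:ℝ) := by exact_mod_cast hk1
  have hkR : (0:ℝ) < (k:ℝ)^a := Real.rpow_pos_of_pos hkpos a
  have hkle : (k:ℝ)^a ≤ Z := Zterm_le a M k (Finset.mem_Icc.mpr ⟨hk1, hkM⟩)
  set p := (k:ℝ)^a / Z with hpdef
  have hp0 : 0 ≤ p := by positivity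
  have hp1 : p ≤ 1 := by
    rw [hpdef, div_le_one hZ0]; exact hkle
  have hpow01 : (1 - p)^(M-1) ≤ 1 := pow_le_one₀ (by linarith) (by linarith)
  have hpownn : 0 ≤ (1 - p)^(M-1) := pow_nonneg (by linarith) _
  have hxa : (0:ℝ) < x^a := Real.rpow_pos_of_pos hx.1 a
  -- key: (k:ℝ)^a ≤ (M:ℝ)^a * (x^a + 1)
  have hka : (k:ℝ)^a ≤ (M:ℝ)^a * (x^a + 1) := by
    rcases le_or_gt 0 a with hA | hA
    · have : (k:ℝ)^a ≤ (M:ℝ)^a := Real.rpow_le_rpow hkpos.le (by exact_mod_cast hkM) hA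
      nlinarith [Real.rpow_pos_of_pos hMR a]
    · have h1 : (k:ℝ)^a ≤ ((M:ℝ)*x)^a :=
        Real.rpow_le_rpow_of_nonpos (mul_pos hMR hx.1) hklb hA.le
      rw [Real.mul_rpow hMR.le hx.1.le] at h1
      nlinarith [Real.rpow_pos_of_pos hMR a]
  have hMp : (M:ℝ) * p ≤ 2*(a+1) * (x^a + 1) := by
    have h2 : (M:ℝ) * p = ((k:ℝ)^a * (M:ℝ)) / Z := by rw [hpdef]; ring
    have h3 : ((k:ℝ)^a * (M:ℝ)) / Z ≤ ((M:ℝ)^a * (x^a+1) * (M:ℝ)) / Z := by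
      gcongr
    have h4 : ((M:ℝ)^a * (x^a+1) * (M:ℝ)) / Z = (x^a+1) * ((M:ℝ)^(a+1) / Z) := by
      rw [Real.rpow_add_one hMR.ne']; ring
    rw [h2]
    calc ((k:ℝ)^a * (M:ℝ)) / Z ≤ (x^a+1) * ((M:ℝ)^(a+1) / Z) := by rw [← h4]; exact h3
      _ ≤ (x^a+1) * (2*(a+1)) := by
          apply mul_le_mul_of_nonneg_left hZle (by positivity)
      _ = 2*(a+1) * (x^a + 1) := by ring
  have hnn : 0 ≤ (M:ℝ) * (p * (1 - p)^(M-1)) := by positivity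
  rw [Real.norm_eq_abs, abs_of_nonneg hnn]
  calc (M:ℝ) * (p * (1 - p)^(M-1)) = ((M:ℝ) * p) * (1-p)^(M-1) := by ring
    _ ≤ ((M:ℝ) * p) * 1 := by
        apply mul_le_mul_of_nonneg_left hpow01 (by positivity)
    _ = (M:ℝ) * p := by ring
    _ ≤ 2*(a+1) * (x^a + 1) := hMp

lemma Zratio_tendsto (a : ℝ) (ha : -1 < a) :
    Tendsto (fun M : ℕ => (M:ℝ)^(a+1) / (∑ m ∈ Finset.Icc 1 M, (m:ℝ)^a)) atTop
      (nhds (a+1)) := by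
  have ha1 : (0:ℝ) < a + 1 := by linarith
  have h := (zsum_tendsto a ha).inv₀ (by positivity)
  simp only [Pi.inv_apply, inv_div, one_div, inv_inv] at h
  exact h

lemma Mp_tendsto (a : ℝ) (ha : -1 < a) (x : ℝ) (hx : x ∈ Set.Ioc (0:ℝ) 1) :
    Tendsto (fun M : ℕ => (M:ℝ) * ((⌈(M:ℝ)*x⌉₊:ℝ)^a / (∑ m ∈ Finset.Icc 1 M, (m:ℝ)^a)))
      atTop (nhds ((a+1) * x^a)) := by
  have ha1 : (0:ℝ) < a + 1 := by linarith
  have hMinv : Tendsto (fun M : ℕ => ((M : ℝ))⁻¹) atTop (nhds 0) :=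
    tendsto_inv_atTop_zero.comp tendsto_natCast_atTop_atTop
  -- k M / M → x
  have hratio : Tendsto (fun M : ℕ => (⌈(M:ℝ)*x⌉₊:ℝ) / M) atTop (nhds x) := by
    have hup : Tendsto (fun M : ℕ => x + ((M:ℝ))⁻¹) atTop (nhds x) := by
      have := (tendsto_const_nhds (x := x) (f := atTop (α := ℕ))).add hMinv
      simpa using this
    apply tendsto_of_tendsto_of_tendsto_of_le_of_le' (tendsto_const_nhds) hup
    · filter_upwards [eventually_ge_atTop 1] with M hM
      have hMR : (0:ℝ) < (M:ℝ) := by exact_mod_cast hM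
      obtain ⟨_, _, hlb, _⟩ := kfacts M hM x hx
      rw [le_div_iff₀ hMR]
      nlinarith
    · filter_upwards [eventually_ge_atTop 1] with M hM
      have hMR : (0:ℝ) < (M:ℝ) := by exact_mod_cast hM
      obtain ⟨_, _, _, hub⟩ := kfacts M hM x hx
      rw [div_le_iff₀ hMR]
      have : (x + (M:ℝ)⁻¹) * M = x * M + 1 := by field_simp
      rw [this]
      nlinarith
  have hrpow : Tendsto (fun M : ℕ => ((⌈(M:ℝ)*x⌉₊:ℝ) / M)^a) atTop (nhds (x^a)) := by
    have hc : ContinuousAt (fun y : ℝ => y ^ a) x :=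
      Real.continuousAt_rpow_const x a (Or.inl hx.1.ne')
    exact hc.tendsto.comp hratio
  have hmain := hrpow.mul (Zratio_tendsto a ha)
  rw [mul_comm] at hmain
  apply hmain.congr'
  filter_upwards [eventually_ge_atTop 1] with M hM
  have hMR : (0:ℝ) < (M:ℝ) := by exact_mod_cast hM
  obtain ⟨hk1, _, _, _⟩ := kfacts M hM x hx
  have hkpos : (0:ℝ) < (⌈(M:ℝ)*x⌉₊:ℝ) := by exact_mod_cast hk1
  have hZ0 : 0 < ∑ m ∈ Finset.Icc 1 M, (m:ℝ)^a := Zpos a M hM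
  rw [Real.div_rpow hkpos.le hMR.le, Real.rpow_add_one hMR.ne']
  field_simp

lemma pointwise_lim (a : ℝ) (ha : -1 < a) (x : ℝ) (hx : x ∈ Set.Ioc (0:ℝ) 1) :
    Tendsto (fun M : ℕ => (M:ℝ) * ((⌈(M:ℝ)*x⌉₊:ℝ)^a / (∑ m ∈ Finset.Icc 1 M, (m:ℝ)^a) *
        (1 - (⌈(M:ℝ)*x⌉₊:ℝ)^a / (∑ m ∈ Finset.Icc 1 M, (m:ℝ)^a)) ^ (M-1)))
      atTop (nhds ((a+1) * (x^a * Real.exp (-(a+1) * x^a)))) := by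
  have ha1 : (0:ℝ) < a + 1 := by linarith
  set p : ℕ → ℝ := fun M => (⌈(M:ℝ)*x⌉₊:ℝ)^a / (∑ m ∈ Finset.Icc 1 M, (m:ℝ)^a) with hp
  have hMp : Tendsto (fun M : ℕ => (M:ℝ) * p M) atTop (nhds ((a+1) * x^a)) :=
    Mp_tendsto a ha x hx
  have hp01 : ∀ᶠ M in atTop, 0 < p M ∧ p M < 1 := by
    filter_upwards [eventually_ge_atTop 2] with M hM
    have hM1 : 1 ≤ M := by omega
    obtain ⟨hk1, hkM, _, _⟩ := kfacts M hM1 x hx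
    have hkpos : (0:ℝ) < (⌈(M:ℝ)*x⌉₊:ℝ) := by exact_mod_cast hk1
    have hZ0 : 0 < ∑ m ∈ Finset.Icc 1 M, (m:ℝ)^a := Zpos a M hM1
    constructor
    · exact div_pos (Real.rpow_pos_of_pos hkpos a) hZ0
    · rw [hp, div_lt_one hZ0]
      exact Zterm_lt a M _ hM (Finset.mem_Icc.mpr ⟨hk1, hkM⟩)
  have hpow := pow_tendsto_exp hp01 hMp
  have := hMp.mul hpow
  apply this.congr' ?_ |>.mono_right ?_
  · apply Eventually.of_forall
    intro M
    ring
  · apply le_of_eq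
    congr 1
    rw [neg_mul]
    ring

/-- Algebraic fitness model `φ(i) = i^a`, `a > -1`: the average number of
introverts converges to `A(a) = (a+1) ∫₀¹ x^a exp(-(a+1) x^a) dx`. -/
theorem stmt12 (a : ℝ) (ha : -1 < a) :
    Filter.Tendsto (fun M : ℕ =>
        ∑ k ∈ Finset.Icc 1 M,
          ((k : ℝ) ^ a / ∑ m ∈ Finset.Icc 1 M, (m : ℝ) ^ a) *
            (1 - (k : ℝ) ^ a / ∑ m ∈ Finset.Icc 1 M, (m : ℝ) ^ a) ^ (M - 1))
      Filter.atTop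
      (nhds ((a + 1) * ∫ x in (0:ℝ)..1, x ^ a * Real.exp (-(a + 1) * x ^ a))) := by
  have ha1 : (0:ℝ) < a + 1 := by linarith
  have hgoal : (a + 1) * ∫ x in (0:ℝ)..1, x ^ a * Real.exp (-(a + 1) * x ^ a)
      = ∫ x in (0:ℝ)..1, (a+1) * (x ^ a * Real.exp (-(a + 1) * x ^ a)) :=
    (intervalIntegral.integral_const_mul _ _).symm
  rw [hgoal]
  have key : Tendsto (fun M : ℕ => ∫ x in (0:ℝ)..1,
      (M:ℝ) * ((⌈(M:ℝ)*x⌉₊:ℝ)^a / (∑ m ∈ Finset.Icc 1 M, (m:ℝ)^a) *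
        (1 - (⌈(M:ℝ)*x⌉₊:ℝ)^a / (∑ m ∈ Finset.Icc 1 M, (m:ℝ)^a)) ^ (M-1)))
      atTop (nhds (∫ x in (0:ℝ)..1, (a+1) * (x ^ a * Real.exp (-(a + 1) * x ^ a)))) := by
    apply intervalIntegral.tendsto_integral_filter_of_dominated_convergence
      (bound := fun x => 2*(a+1) * (x^a + 1))
    · apply Eventually.of_forall
      intro M
      apply Measurable.aestronglyMeasurable
      apply measurable_const.mul
      have hq : Measurable fun k : ℕ => (k:ℝ)^a / (∑ m ∈ Finset.Icc 1 M, (m:ℝ)^a) *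
          (1 - (k:ℝ)^a / (∑ m ∈ Finset.Icc 1 M, (m:ℝ)^a)) ^ (M-1) :=
        measurable_from_top
      exact hq.comp (Nat.measurable_ceil.comp (measurable_id.const_mul _))
    · filter_upwards [(Zratio_tendsto a ha).eventually
        (eventually_le_nhds (by linarith : a+1 < 2*(a+1))), eventually_ge_atTop 1]
        with M hZle hM1
      apply ae_of_all
      intro x hx
      rw [Set.uIoc_of_le (by norm_num : (0:ℝ) ≤ 1)] at hx
      exact bound_est a ha M hM1 hZle x hx
    · exact ((intervalIntegral.intervalIntegrable_rpow' ha).add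
        intervalIntegrable_const).const_mul _
    · apply ae_of_all
      intro x hx
      rw [Set.uIoc_of_le (by norm_num : (0:ℝ) ≤ 1)] at hx
      exact pointwise_lim a ha x hx
  apply key.congr'
  filter_upwards [eventually_ge_atTop 1] with M hM
  exact (sum_eq_integral M hM (fun k => (k:ℝ)^a / (∑ m ∈ Finset.Icc 1 M, (m:ℝ)^a) *
    (1 - (k:ℝ)^a / (∑ m ∈ Finset.Icc 1 M, (m:ℝ)^a)) ^ (M-1))).symm
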